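/- non(M), the least cardinality of a non-meager subset of the reals, equals the least cardinality of a family S ⊆ {0,1}^ω with the property that for every f : ω → ⋃_{n∈ω} {0,1}^n there exists {a_n} ∈ S such that for infinitely many i ∈ ω the sequence {a_{i+n}}_{n∈ω} extends the finite sequence f(i). -/

import Mathlib

open Set

private lemma nonmeager_univ {X : Type*} [TopologicalSpace X] [BaireSpace X] [Nonempty X] :
    ¬ IsMeagre (Set.univ : Set X) := by
  intro h
  have hd : Dense ((Set.univ : Set X)ᶜ) := dense_of_mem_residual h
  simp [dense_iff_closure_eq, closure_empty] at hd
  exact (Set.univ_nonempty (α := X)).ne_empty hd.symm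


private def Cyl (i m : ℕ) (s : Fin m → Bool) : Set (ℕ → Bool) :=
  {a | ∀ j : Fin m, a (i + (j : ℕ)) = s j}

private lemma isOpen_cyl (i m : ℕ) (s : Fin m → Bool) : IsOpen (Cyl i m s) := by
  have : Cyl i m s = ⋂ j : Fin m, (fun a : ℕ → Bool => a (i + (j : ℕ))) ⁻¹' {s j} := by
    ext a; simp [Cyl]
  rw [this]
  exact isOpen_iInter_of_finite fun j =>
    (continuous_apply (i + (j : ℕ))).isOpen_preimage _ (isOpen_discrete _)

/-- Property (∗) as in the statement. -/
private def Pstar (S : Set (ℕ → Bool)) : Prop :=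
  ∀ f : ℕ → Σ n : ℕ, Fin n → Bool, ∃ a ∈ S,
    {i : ℕ | ∀ j : Fin (f i).1, a (i + (j : ℕ)) = (f i).2 j}.Infinite

private lemma pstar_of_nonmeager {S : Set (ℕ → Bool)} (hS : ¬ IsMeagre S) : Pstar S := by
  intro f
  set U : ℕ → Set (ℕ → Bool) := fun N => ⋃ i ∈ {i | N ≤ i}, Cyl i (f i).1 (f i).2 with hU
  have hUopen : ∀ N, IsOpen (U N) := fun N =>
    isOpen_biUnion fun i _ => isOpen_cyl i (f i).1 (f i).2
  have hUdense : ∀ N, Dense (U N) := by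
    intro N
    rw [dense_iff_inter_open]
    rintro V hV ⟨a₀, ha₀⟩
    rcases isOpen_pi_iff.1 hV a₀ ha₀ with ⟨I, u, hu, hsub⟩
    set i := max N ((I.sup id) + 1) with hi
    set a : ℕ → Bool := fun k => if h : i ≤ k ∧ k - i < (f i).1
      then (f i).2 ⟨k - i, h.2⟩ else a₀ k with ha
    refine ⟨a, hsub ?_, ?_⟩
    · intro k hk
      have hki : k < i := lt_of_lt_of_le (Nat.lt_succ_of_le (Finset.le_sup (f := id) hk))
        (le_max_right _ _)
      have : a k = a₀ k := by
        simp only [ha]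
        rw [dif_neg]
        rintro ⟨h1, -⟩; omega
      rw [this]; exact (hu k hk).2
    · refine mem_iUnion₂.2 ⟨i, (show N ≤ i from le_max_left _ _), ?_⟩
      intro j
      simp only [ha]
      rw [dif_pos ⟨Nat.le_add_right _ _, by simp⟩]
      exact congrArg (f i).2 (Fin.ext (by simp))
  have hres : (⋂ N, U N) ∈ residual _ :=
    countable_iInter_mem.2 fun N => residual_of_dense_open (hUopen N) (hUdense N)
  have : ¬ S ⊆ (⋂ N, U N)ᶜ := fun h => hS ((IsMeagre.mono h (by simpa [IsMeagre, compl_compl] using hres)))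
  rcases not_subset.1 this with ⟨a, haS, haU⟩
  rw [mem_compl_iff, not_not, mem_iInter] at haU
  refine ⟨a, haS, ?_⟩
  intro hfin
  rcases (Set.Finite.bddAbove hfin) with ⟨N, hN⟩
  rcases mem_iUnion₂.1 (haU (N + 1)) with ⟨i, hiN, hia⟩
  have := hN (show i ∈ {i : ℕ | ∀ j : Fin (f i).1, a (i + (j : ℕ)) = (f i).2 j} from hia)
  have h2 : N + 1 ≤ i := hiN
  omega


private lemma nwd_union {X : Type*} [TopologicalSpace X] {s t : Set X}
    (hs : IsNowhereDense s) (ht : IsNowhereDense t) : IsNowhereDense (s ∪ t) := by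
  rw [IsNowhereDense, closure_union, ← subset_empty_iff]
  have h1 : interior (closure s ∪ closure t) \ closure s ⊆ interior (closure t) :=
    interior_maximal (fun y hy => (interior_subset hy.1).resolve_left hy.2)
      (isOpen_interior.sdiff isClosed_closure)
  have h2 : interior (closure s ∪ closure t) ⊆ closure s := by
    intro y hy
    by_contra hc
    have ht' : interior (closure t) = ∅ := ht
    exact absurd (h1 ⟨hy, hc⟩) (ht' ▸ notMem_empty y)
  have hs' : interior (closure s) = ∅ := hs
  calc interior (closure s ∪ closure t) ⊆ interior (closure s) :=
        interior_maximal h2 isOpen_interior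
    _ ⊆ ∅ := by rw [hs']

/-- key combinatorial step: a nowhere dense set can be avoided by fixing finitely many
coordinates starting at position `i`, uniformly over all values of coordinates `< i`. -/
private lemma avoid_list {G : Set (ℕ → Bool)} (hG : IsNowhereDense G) (i : ℕ)
    (L : List (Fin i → Bool)) :
    ∃ (m : ℕ) (s : Fin m → Bool), ∀ t ∈ L, ∀ a : ℕ → Bool,
      (∀ k : Fin i, a (k : ℕ) = t k) → (∀ j : Fin m, a (i + (j : ℕ)) = s j) →
      a ∉ closure G := by
  induction L with
  | nil => exact ⟨0, Fin.elim0, by simp⟩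
  | cons t L ih =>
    obtain ⟨m, s, hms⟩ := ih
    have hdense : Dense (closure G)ᶜ := by
      rw [← interior_eq_empty_iff_dense_compl]
      simpa [IsNowhereDense, closure_closure] using hG.closure
    set W : Set (ℕ → Bool) :=
      {a | (∀ k : Fin i, a (k : ℕ) = t k) ∧ (∀ j : Fin m, a (i + (j : ℕ)) = s j)} with hW
    have hWopen : IsOpen W := by
      have : W = {a : ℕ → Bool | ∀ k : Fin i, a (0 + (k : ℕ)) = t k} ∩
          {a : ℕ → Bool | ∀ j : Fin m, a (i + (j : ℕ)) = s j} := by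
        ext a; simp [hW]
      rw [this]
      exact (isOpen_cyl 0 i t).inter (isOpen_cyl i m s)
    have hWne : W.Nonempty := by
      refine ⟨fun k => if h : k < i then t ⟨k, h⟩ else if h2 : k - i < m then s ⟨k - i, h2⟩
        else false, ?_, ?_⟩
      · intro k
        exact dif_pos k.isLt
      · intro j
        have hj := j.isLt
        show (if h : i + (j : ℕ) < i then t ⟨i + (j : ℕ), h⟩
          else if h2 : i + (j : ℕ) - i < m then s ⟨i + (j : ℕ) - i, h2⟩ else false) = s j
        rw [dif_neg (by omega), dif_pos (by omega)]
        exact congrArg s (Fin.ext (by simp))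
    obtain ⟨a₀, haW, haC⟩ := hdense.inter_open_nonempty W hWopen hWne
    obtain ⟨I, u, hu, hsub⟩ := isOpen_pi_iff.1 (isOpen_compl_iff.2 isClosed_closure) a₀ haC
    refine ⟨m + (I.sup id) + 1, fun j => a₀ (i + (j : ℕ)), ?_⟩
    rintro t' ht' a hpre hmatch
    rcases List.mem_cons.1 ht' with rfl | ht'
    · -- new prefix t: a agrees with a₀ on I
      apply hsub
      intro k hk
      have hks : k ≤ I.sup id := Finset.le_sup (f := id) hk
      have : a k = a₀ k := by
        rcases lt_or_ge k i with h | h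
        · rw [hpre ⟨k, h⟩, ← haW.1 ⟨k, h⟩]
        · have hkm : k - i < m + (I.sup id) + 1 := by omega
          have h3 : a (i + (k - i)) = a₀ (i + (k - i)) := hmatch ⟨k - i, hkm⟩
          rw [show k = i + (k - i) by omega]
          exact h3
      rw [this]; exact (hu k hk).2
    · -- old prefixes: use ih, since our string extends s
      refine hms t' ht' a hpre ?_
      intro j
      have hj := j.isLt
      have h3 : a (i + (j : ℕ)) = a₀ (i + (j : ℕ)) := hmatch ⟨(j : ℕ), by omega⟩
      rw [h3]
      exact haW.2 j

private lemma avoid {G : Set (ℕ → Bool)} (hG : IsNowhereDense G) (i : ℕ) :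
    ∃ (m : ℕ) (s : Fin m → Bool), ∀ a : ℕ → Bool,
      (∀ j : Fin m, a (i + (j : ℕ)) = s j) → a ∉ G := by
  obtain ⟨m, s, h⟩ := avoid_list hG i (Finset.univ : Finset (Fin i → Bool)).toList
  refine ⟨m, s, fun a ha => ?_⟩
  intro haG
  exact h (fun k : Fin i => a (k : ℕ)) (Finset.mem_toList.2 (Finset.mem_univ _)) a
    (fun k => rfl) ha (subset_closure haG)

private lemma not_pstar_of_meager {S : Set (ℕ → Bool)} (hS : IsMeagre S) : ¬ Pstar S := by
  obtain ⟨T, hTnwd, hTcnt, hTsub⟩ := isMeagre_iff_countable_union_isNowhereDense.1 hS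
  obtain ⟨F, hF⟩ := (hTcnt.insert ∅).exists_eq_range (insert_nonempty _ _)
  have hFnwd : ∀ n, IsNowhereDense (F n) := by
    intro n
    have : F n ∈ insert ∅ T := hF ▸ mem_range_self n
    rcases this with h | h
    · simp [h]
    · exact hTnwd _ h
  have hGnwd : ∀ i, IsNowhereDense (⋃ k ∈ Finset.range (i + 1), F k) := by
    intro i
    induction i with
    | zero => simpa using hFnwd 0
    | succ n ih =>
      have : (⋃ k ∈ Finset.range (n + 2), F k) =
          (⋃ k ∈ Finset.range (n + 1), F k) ∪ F (n + 1) := by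
        rw [Finset.range_add_one]
        simp [Set.biUnion_insert, union_comm]
      rw [this]
      exact nwd_union ih (hFnwd (n + 1))
  choose m s hms using fun i => avoid (hGnwd i) i
  intro hP
  obtain ⟨a, haS, hinf⟩ := hP (fun i => ⟨m i, s i⟩)
  have haT : a ∈ ⋃ n, F n := by
    have := hTsub haS
    rw [sUnion_eq_biUnion] at this
    obtain ⟨t, htT, hat⟩ := mem_iUnion₂.1 this
    have : t ∈ range F := hF ▸ mem_insert_of_mem _ htT
    obtain ⟨n, rfl⟩ := this
    exact mem_iUnion.2 ⟨n, hat⟩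
  obtain ⟨n, han⟩ := mem_iUnion.1 haT
  obtain ⟨i, hiM, hni⟩ := hinf.exists_gt n
  exact hms i a hiM (mem_biUnion (Finset.mem_range.2 (by omega)) han)


private noncomputable def val (a : ℕ → Bool) (n : ℕ) : ℝ :=
  ∑ j ∈ Finset.range n, cond (a j) ((1/2 : ℝ)^(j+1)) 0

private lemma val_succ (a : ℕ → Bool) (n : ℕ) :
    val a (n+1) = val a n + cond (a n) ((1/2 : ℝ)^(n+1)) 0 :=
  Finset.sum_range_succ _ _

private lemma cond_nonneg (b : Bool) (n : ℕ) : 0 ≤ cond b ((1/2 : ℝ)^(n+1)) 0 := by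
  cases b <;> simp <;> positivity

private lemma cond_le (b : Bool) (n : ℕ) : cond b ((1/2 : ℝ)^(n+1)) 0 ≤ (1/2 : ℝ)^(n+1) := by
  cases b <;> simp <;> positivity

private lemma val_mono {a : ℕ → Bool} {n m : ℕ} (h : n ≤ m) : val a n ≤ val a m := by
  induction m with
  | zero => simp_all
  | succ m ih =>
    rcases Nat.lt_or_ge n (m+1) with h2 | h2
    · have := ih (by omega)
      rw [val_succ]
      have := cond_nonneg (a m) m
      linarith
    · have : n = m + 1 := by omega
      simp [this]

private lemma val_upper {a : ℕ → Bool} {n m : ℕ} (h : n ≤ m) :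
    val a m ≤ val a n + (1/2 : ℝ)^n - (1/2 : ℝ)^m := by
  induction m with
  | zero =>
    have : n = 0 := by omega
    simp [this]
  | succ m ih =>
    rcases Nat.lt_or_ge n (m+1) with h2 | h2
    · have hih := ih (by omega)
      rw [val_succ]
      have hc := cond_le (a m) m
      have : (1/2 : ℝ)^(m+1) = (1/2 : ℝ)^m / 2 := by ring
      nlinarith [pow_pos (by norm_num : (0:ℝ) < 1/2) m]
    · have : n = m + 1 := by omega
      rw [this]
      simp

private lemma val_congr {a b : ℕ → Bool} {n : ℕ} (h : ∀ j < n, a j = b j) :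
    val a n = val b n := by
  unfold val
  refine Finset.sum_congr rfl fun j hj => ?_
  rw [h j (Finset.mem_range.1 hj)]

private lemma val_nonneg (a : ℕ → Bool) (n : ℕ) : 0 ≤ val a n :=
  Finset.sum_nonneg fun j _ => cond_nonneg (a j) j

/-- the binary-expansion value of a 0-1-sequence -/
private noncomputable def gmap (a : ℕ → Bool) : ℝ := ⨆ n, val a n

private lemma val_bddAbove (a : ℕ → Bool) : BddAbove (Set.range fun n => val a n) := by
  refine ⟨1, ?_⟩
  rintro y ⟨m, rfl⟩
  have h1 := val_upper (a := a) (Nat.zero_le m)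
  have h2 := pow_pos (by norm_num : (0:ℝ) < 1/2) m
  have h0 : val a 0 = 0 := by simp [val]
  have hp0 : (1/2 : ℝ)^0 = 1 := pow_zero _
  simp only
  linarith

private lemma le_gmap (a : ℕ → Bool) (n : ℕ) : val a n ≤ gmap a :=
  le_ciSup (val_bddAbove a) n

private lemma gmap_le (a : ℕ → Bool) (n : ℕ) : gmap a ≤ val a n + (1/2 : ℝ)^n := by
  refine ciSup_le fun m => ?_
  rcases Nat.le_total m n with h | h
  · have := val_mono (a := a) h
    have := pow_pos (by norm_num : (0:ℝ) < 1/2) n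
    linarith
  · have := val_upper (a := a) h
    have := pow_pos (by norm_num : (0:ℝ) < 1/2) m
    linarith

/-- separation: two sequences differing below `n` have `val`s at least `(1/2)^n` apart. -/
private lemma val_sep {a b : ℕ → Bool} {j n : ℕ} (hj : j < n) (ha : a j = true)
    (hb : b j = false) (hagree : ∀ k < j, a k = b k) :
    val b n + (1/2 : ℝ)^n ≤ val a n := by
  have h1 : val a j = val b j := val_congr hagree
  have h2 : val a (j+1) = val a j + (1/2 : ℝ)^(j+1) := by rw [val_succ, ha]; simp
  have h3 : val b (j+1) = val b j := by rw [val_succ, hb]; simp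
  have h4 : val a (j+1) ≤ val a n := val_mono hj
  have h5 : val b n ≤ val b (j+1) + (1/2 : ℝ)^(j+1) - (1/2 : ℝ)^n := val_upper hj
  linarith

private lemma val_unique {a b : ℕ → Bool} {n : ℕ}
    (h1 : val a n < val b n + (1/2 : ℝ)^n) (h2 : val b n < val a n + (1/2 : ℝ)^n) :
    ∀ j < n, a j = b j := by
  intro j
  induction j using Nat.strong_induction_on with
  | _ j ih =>
    intro hj
    by_contra hne
    have hagree : ∀ k < j, a k = b k := fun k hk => ih k hk (by omega)
    cases ha : a j <;> cases hb : b j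
    · exact hne (ha.trans hb.symm)
    · exact absurd (val_sep hj hb ha (fun k hk => (hagree k hk).symm)) (by linarith)
    · exact absurd (val_sep hj ha hb hagree) (by linarith)
    · exact hne (ha.trans hb.symm)

/-- capturing a real `y` by extending a prefix. -/
private lemma capture {a : ℕ → Bool} {n : ℕ} {y : ℝ} (m : ℕ)
    (h1 : val a n ≤ y) (h2 : y ≤ val a n + (1/2 : ℝ)^n) :
    ∃ b : ℕ → Bool, (∀ k < n, b k = a k) ∧ val b (n+m) ≤ y ∧
      y ≤ val b (n+m) + (1/2 : ℝ)^(n+m) := by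
  induction m generalizing a n with
  | zero => exact ⟨a, fun k _ => rfl, by simpa using h1, by simpa using h2⟩
  | succ m ih =>
    by_cases hc : y ≤ val a n + (1/2 : ℝ)^(n+1)
    · -- bit false
      set a' := Function.update a n false with ha'
      have hv : val a' (n+1) = val a n := by
        rw [val_succ]
        have : a' n = false := Function.update_self n false a
        rw [this]
        simp only [cond_false, add_zero]
        exact val_congr fun j hj => Function.update_of_ne (by omega) _ _
      obtain ⟨b, hbk, hb1, hb2⟩ := ih (a := a') (n := n+1) (by rw [hv]; exact h1)
        (by rw [hv]; exact hc)
      refine ⟨b, fun k hk => ?_, by rw [show n+1+m = n+(m+1) by omega] at hb1; exact hb1,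
        by rw [show n+1+m = n+(m+1) by omega] at hb2; exact hb2⟩
      rw [hbk k (by omega)]
      exact Function.update_of_ne (by omega) _ _
    · -- bit true
      push_neg at hc
      set a' := Function.update a n true with ha'
      have hv : val a' (n+1) = val a n + (1/2 : ℝ)^(n+1) := by
        rw [val_succ]
        have : a' n = true := Function.update_self n true a
        rw [this]
        simp only [cond_true]
        congr 1
        exact val_congr fun j hj => Function.update_of_ne (by omega) _ _
      have hpow : (1/2 : ℝ)^n = 2 * (1/2 : ℝ)^(n+1) := by ring
      obtain ⟨b, hbk, hb1, hb2⟩ := ih (a := a') (n := n+1) (by rw [hv]; linarith)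
        (by rw [hv]; linarith)
      refine ⟨b, fun k hk => ?_, by rw [show n+1+m = n+(m+1) by omega] at hb1; exact hb1,
        by rw [show n+1+m = n+(m+1) by omega] at hb2; exact hb2⟩
      rw [hbk k (by omega)]
      exact Function.update_of_ne (by omega) _ _

private noncomputable def approx (y : ℝ) : ℕ → (ℕ → Bool)
  | 0 => fun _ => false
  | n+1 => Function.update (approx y n) n
      (decide (val (approx y n) n + (1/2 : ℝ)^(n+1) < y))

private lemma approx_stable (y : ℝ) : ∀ {m m' k : ℕ}, k < m → m ≤ m' →
    approx y m' k = approx y m k := by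
  intro m m' k hk hm
  induction m' with
  | zero => omega
  | succ m' ih =>
    rcases Nat.lt_or_ge m (m'+1) with h | h
    · have : approx y (m'+1) k = approx y m' k := by
        show Function.update (approx y m') m' _ k = approx y m' k
        exact Function.update_of_ne (by omega) _ _
      rw [this]
      exact ih (by omega)
    · have : m = m' + 1 := by omega
      rw [this]

private lemma approx_capture {y : ℝ} (h0 : 0 ≤ y) (h1 : y ≤ 1) (n : ℕ) :
    val (approx y n) n ≤ y ∧ y ≤ val (approx y n) n + (1/2 : ℝ)^n := by
  induction n with
  | zero =>
    constructor
    · simpa [val] using h0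
    · simpa [val] using h1
  | succ n ih =>
    set a := approx y n with ha
    set bit := decide (val a n + (1/2 : ℝ)^(n+1) < y) with hbit
    have happ : approx y (n+1) = Function.update a n bit := rfl
    have hvn : val (approx y (n+1)) n = val a n :=
      val_congr fun j hj => Function.update_of_ne (by omega) _ _
    have hvs : val (approx y (n+1)) (n+1) = val a n + cond bit ((1/2 : ℝ)^(n+1)) 0 := by
      rw [val_succ, hvn, happ, Function.update_self]
    by_cases hc : val a n + (1/2 : ℝ)^(n+1) < y
    · have hbt : bit = true := decide_eq_true hc
      rw [hvs, hbt]
      simp only [cond_true]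
      have hpow : (1/2 : ℝ)^n = 2 * (1/2 : ℝ)^(n+1) := by ring
      exact ⟨by linarith, by linarith [ih.2]⟩
    · have hbt : bit = false := decide_eq_false hc
      rw [hvs, hbt]
      simp only [cond_false, add_zero]
      push_neg at hc
      exact ⟨ih.1, hc⟩

private noncomputable def dig (y : ℝ) : ℕ → Bool := fun k => approx y (k+1) k

private lemma dig_val (y : ℝ) (n : ℕ) : val (dig y) n = val (approx y n) n :=
  val_congr fun j hj => (approx_stable y (m := j+1) (m' := n) (Nat.lt_succ_self j) hj).symm

private lemma dig_capture {y : ℝ} (h0 : 0 ≤ y) (h1 : y ≤ 1) (n : ℕ) :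
    val (dig y) n ≤ y ∧ y ≤ val (dig y) n + (1/2 : ℝ)^n := by
  rw [dig_val]
  exact approx_capture h0 h1 n

/-- the digit map `ℝ → 2^ω` via fractional part. -/
private noncomputable def hmap (x : ℝ) : ℕ → Bool := dig (Int.fract x)

private lemma bcyl_open (a : ℕ → Bool) (n : ℕ) :
    IsOpen {b : ℕ → Bool | ∀ j < n, b j = a j} := by
  have : {b : ℕ → Bool | ∀ j < n, b j = a j} =
      ⋂ j ∈ Finset.range n, (fun b : ℕ → Bool => b j) ⁻¹' {a j} := by
    ext b; simp
  rw [this]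
  exact isOpen_biInter_finset fun j _ =>
    (continuous_apply j).isOpen_preimage _ (isOpen_discrete _)

private lemma gmap_pre_nwd {F : Set ℝ} (hF : IsNowhereDense F) :
    IsNowhereDense (gmap ⁻¹' F) := by
  rw [IsNowhereDense, eq_empty_iff_forall_notMem]
  intro x hx
  obtain ⟨I, u, hu, hsub⟩ := isOpen_pi_iff.1 isOpen_interior x hx
  set n := I.sup id + 1 with hn
  have hC : ∀ b : ℕ → Bool, (∀ j < n, b j = x j) → b ∈ closure (gmap ⁻¹' F) := by
    intro b hb
    refine interior_subset (hsub ?_)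
    intro k hk
    have hkn : k < n := Nat.lt_succ_of_le (Finset.le_sup (f := id) hk)
    rw [hb k hkn]
    exact (hu k hk).2
  have hd : Dense (closure F)ᶜ := by
    rw [← interior_eq_empty_iff_dense_compl]
    exact (hF : interior (closure F) = ∅)
  have hpow1 : (0:ℝ) < (1/2:ℝ)^(n+1) := pow_pos (by norm_num) _
  have hpow2 : (1/2:ℝ)^n = 2 * (1/2:ℝ)^(n+1) := by ring
  obtain ⟨y, hyI, hyC⟩ := hd.inter_open_nonempty (Ioo (val x n) (val x n + (1/2 : ℝ)^n))
    isOpen_Ioo ⟨val x n + (1/2 : ℝ)^(n+1), by constructor <;> [linarith; linarith]⟩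
  obtain ⟨ε, hε, hball⟩ := Metric.isOpen_iff.1 (isOpen_compl_iff.2 isClosed_closure) y hyC
  obtain ⟨N, hN⟩ := exists_pow_lt_of_lt_one hε (by norm_num : (1/2:ℝ) < 1)
  obtain ⟨b, hbk, hb1, hb2⟩ := capture (a := x) (n := n) N (le_of_lt hyI.1) (le_of_lt hyI.2)
  have hpow3 : (1/2:ℝ)^(n+N) ≤ (1/2:ℝ)^N :=
    pow_le_pow_of_le_one (by norm_num) (by norm_num) (by omega)
  set C' := {c : ℕ → Bool | ∀ j < n + N, c j = b j} with hC'
  have hC'sub : C' ⊆ closure (gmap ⁻¹' F) := fun c hc =>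
    hC c (fun j hj => (hc j (by omega)).trans (hbk j hj))
  have hC'dis : C' ∩ (gmap ⁻¹' F) = ∅ := by
    rw [eq_empty_iff_forall_notMem]
    rintro c ⟨hc, hcF⟩
    have hval : val c (n+N) = val b (n+N) := val_congr hc
    have h1 := le_gmap c (n+N)
    have h2 := gmap_le c (n+N)
    have hdist : dist (gmap c) y < ε := by
      rw [Real.dist_eq, abs_sub_lt_iff]
      constructor <;> linarith
    exact hball hdist (subset_closure hcF)
  have hbmem : b ∈ C' := fun j hj => rfl
  have hmem : b ∈ C' ∩ closure (gmap ⁻¹' F) := ⟨hbmem, hC'sub hbmem⟩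
  have hfin := (bcyl_open b (n+N)).inter_closure (t := gmap ⁻¹' F) hmem
  rw [hC'dis, closure_empty] at hfin
  exact notMem_empty b hfin

private lemma hmap_pre_nwd {F : Set (ℕ → Bool)} (hF : IsNowhereDense F) :
    IsNowhereDense (hmap ⁻¹' F) := by
  rw [IsNowhereDense, eq_empty_iff_forall_notMem]
  intro x hx
  obtain ⟨ε, hε, hball⟩ := Metric.isOpen_iff.1 isOpen_interior x hx
  set m : ℤ := ⌊x⌋ with hm
  have hx1 : x < (m:ℝ) + 1 := Int.lt_floor_add_one x
  have hx0 : (m:ℝ) ≤ x := Int.floor_le x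
  set δ : ℝ := min ε ((m:ℝ) + 1 - x) with hδ
  have hδε : δ ≤ ε := min_le_left _ _
  have hδ1 : δ ≤ (m:ℝ) + 1 - x := min_le_right _ _
  have hδpos : 0 < δ := lt_min hε (by linarith)
  clear_value δ
  set α : ℝ := x - (m:ℝ) with hα
  have hα0 : 0 ≤ α := by rw [hα]; linarith
  have hαδ : α + δ ≤ 1 := by rw [hα]; linarith
  have hαx : α = x - (m:ℝ) := hα
  clear_value α
  set y₀ : ℝ := α + δ/2 with hy₀
  clear_value y₀
  have hval0 : val (fun _ => false) 0 = 0 := by simp [val]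
  obtain ⟨N', hN'⟩ := exists_pow_lt_of_lt_one (by linarith : (0:ℝ) < δ/2)
    (by norm_num : (1/2:ℝ) < 1)
  have hcap1 : val (fun _ => false) 0 ≤ y₀ := by rw [hval0]; linarith
  have hcap2 : y₀ ≤ val (fun _ => false) 0 + (1/2:ℝ)^0 := by rw [hval0, pow_zero]; linarith
  obtain ⟨b, -, hb1, hb2⟩ := capture (a := fun _ => false) (n := 0) N' hcap1 hcap2
  simp only [Nat.zero_add] at hb1 hb2
  -- dyadic interval of b at depth N' sits inside (α, α+δ)
  have hdy1 : α < val b N' := by linarith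
  have hdy2 : val b N' + (1/2:ℝ)^N' < α + δ := by linarith
  -- Cantor side
  have hd : Dense (closure F)ᶜ := by
    rw [← interior_eq_empty_iff_dense_compl]
    exact (hF : interior (closure F) = ∅)
  obtain ⟨a₀, ha₀W, ha₀C⟩ := hd.inter_open_nonempty {c | ∀ j < N', c j = b j}
    (bcyl_open b N') ⟨b, fun j hj => rfl⟩
  obtain ⟨I, u, hu, hsub⟩ := isOpen_pi_iff.1 (isOpen_compl_iff.2 isClosed_closure) a₀ ha₀C
  set n' : ℕ := max N' (I.sup id + 1) with hn'
  have hcyl : ∀ c : ℕ → Bool, (∀ j < n', c j = a₀ j) → c ∉ closure F := by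
    intro c hc
    apply hsub
    intro k hk
    have hkn : k < n' := by
      have h5 := Finset.le_sup (f := id) hk
      simp only [id] at h5
      exact lt_of_lt_of_le (Nat.lt_succ_of_le h5) (le_max_right _ _)
    rw [hc k hkn]
    exact (hu k hk).2
  have hN'n' : N' ≤ n' := le_max_left _ _
  have hv1 : val a₀ N' = val b N' := val_congr ha₀W
  have hv2 : val a₀ N' ≤ val a₀ n' := val_mono hN'n'
  have hv3 : val a₀ n' ≤ val a₀ N' + (1/2:ℝ)^N' - (1/2:ℝ)^n' := val_upper hN'n'
  set v : ℝ := val a₀ n' with hv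
  clear_value v
  have hpown' : (0:ℝ) < (1/2:ℝ)^n' := pow_pos (by norm_num) _
  -- the final real interval J' = Ioo (m+v) (m+v+(1/2)^n')
  have hJsub : Ioo ((m:ℝ) + v) ((m:ℝ) + v + (1/2:ℝ)^n') ⊆ Metric.ball x ε := by
    rintro z ⟨hz1, hz2⟩
    rw [Metric.mem_ball, Real.dist_eq, abs_sub_lt_iff]
    constructor
    · -- z - x < ε : z < m + v + 2^{-n'} ≤ m + α + δ = x + δ ≤ x + ε
      have : v + (1/2:ℝ)^n' ≤ val b N' + (1/2:ℝ)^N' := by rw [hv]; linarith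
      have : z < (m:ℝ) + α + δ := by linarith
      rw [hαx] at this
      linarith
    · -- x - z < ε : z > m + v ≥ m + α = x
      have h6 : (m:ℝ) + α < z := by
        have : α < v := by rw [hv]; linarith
        linarith
      rw [hαx] at h6
      linarith
  have hJavoid : ∀ z ∈ Ioo ((m:ℝ) + v) ((m:ℝ) + v + (1/2:ℝ)^n'), z ∉ hmap ⁻¹' F := by
    rintro z ⟨hz1, hz2⟩ hzF
    have hαv : α < v := by rw [hv]; linarith
    have hvup : v + (1/2:ℝ)^n' ≤ val b N' + (1/2:ℝ)^N' := by rw [hv]; linarith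
    -- floor of z is m
    have hfloor : ⌊z⌋ = m := by
      rw [Int.floor_eq_iff]
      constructor
      · push_cast; linarith
      · push_cast; linarith
    have hfract : Int.fract z = z - (m:ℝ) := by rw [Int.fract, hfloor]
    set w : ℝ := z - (m:ℝ) with hw
    have hw1 : v < w := by linarith
    have hw2 : w < v + (1/2:ℝ)^n' := by linarith
    have hw0 : 0 ≤ w := by linarith
    have hwle : w ≤ 1 := by linarith
    obtain ⟨hc1, hc2⟩ := dig_capture hw0 hwle n'
    have hagree : ∀ j < n', dig w j = a₀ j := by
      refine val_unique ?_ ?_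
      · linarith
      · linarith
    have : dig w ∉ closure F := hcyl _ hagree
    apply this
    apply subset_closure
    have : hmap z = dig w := by rw [hmap, hfract]
    rw [← this]
    exact hzF
  -- contradiction
  have hz₀ : (m:ℝ) + v + (1/2:ℝ)^(n'+1) ∈ Ioo ((m:ℝ) + v) ((m:ℝ) + v + (1/2:ℝ)^n') := by
    constructor
    · have : (0:ℝ) < (1/2:ℝ)^(n'+1) := pow_pos (by norm_num) _
      linarith
    · have : (1/2:ℝ)^n' = 2 * (1/2:ℝ)^(n'+1) := by ring
      have h2 : (0:ℝ) < (1/2:ℝ)^(n'+1) := pow_pos (by norm_num) _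
      linarith
  have hdis : Ioo ((m:ℝ) + v) ((m:ℝ) + v + (1/2:ℝ)^n') ∩ (hmap ⁻¹' F) = ∅ := by
    rw [eq_empty_iff_forall_notMem]
    rintro z ⟨hz, hzF⟩
    exact hJavoid z hz hzF
  have hmem : (m:ℝ) + v + (1/2:ℝ)^(n'+1) ∈
      Ioo ((m:ℝ) + v) ((m:ℝ) + v + (1/2:ℝ)^n') ∩ closure (hmap ⁻¹' F) :=
    ⟨hz₀, interior_subset (hball (hJsub hz₀))⟩
  have hfin := isOpen_Ioo.inter_closure (t := hmap ⁻¹' F) hmem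
  rw [hdis, closure_empty] at hfin
  exact notMem_empty _ hfin

private lemma meagre_preimage {X Y : Type*} [TopologicalSpace X] [TopologicalSpace Y]
    (f : X → Y) (hf : ∀ F : Set Y, IsNowhereDense F → IsNowhereDense (f ⁻¹' F))
    {M : Set Y} (hM : IsMeagre M) : IsMeagre (f ⁻¹' M) := by
  obtain ⟨T, hT1, hT2, hT3⟩ := isMeagre_iff_countable_union_isNowhereDense.1 hM
  refine isMeagre_iff_countable_union_isNowhereDense.2
    ⟨(fun s => f ⁻¹' s) '' T, ?_, hT2.image _, ?_⟩
  · rintro t ⟨s, hs, rfl⟩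
    exact hf s (hT1 s hs)
  · intro x hx
    obtain ⟨s, hsT, hxs⟩ := hT3 hx
    exact ⟨f ⁻¹' s, ⟨s, hsT, rfl⟩, hxs⟩

/-- `non(M)` (least size of a non-meager subset of `ℝ`) equals the least size of a
family `S ⊆ {0,1}^ω` with property (∗). -/
theorem stmt8 :
    sInf {c : Cardinal | ∃ S : Set ℝ, ¬ IsMeagre S ∧ c = Cardinal.mk S} =
    sInf {c : Cardinal | ∃ S : Set (ℕ → Bool),
      (∀ f : ℕ → Σ n : ℕ, Fin n → Bool, ∃ a ∈ S,
        {i : ℕ | ∀ j : Fin (f i).1, a (i + (j : ℕ)) = (f i).2 j}.Infinite) ∧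
      c = Cardinal.mk S} := by
  have hBeq : {c : Cardinal | ∃ S : Set (ℕ → Bool),
      (∀ f : ℕ → Σ n : ℕ, Fin n → Bool, ∃ a ∈ S,
        {i : ℕ | ∀ j : Fin (f i).1, a (i + (j : ℕ)) = (f i).2 j}.Infinite) ∧
      c = Cardinal.mk S} =
      {c : Cardinal | ∃ S : Set (ℕ → Bool), ¬ IsMeagre S ∧ c = Cardinal.mk S} := by
    ext c
    constructor
    · rintro ⟨S, hP, rfl⟩
      exact ⟨S, fun hm => not_pstar_of_meager hm hP, rfl⟩
    · rintro ⟨S, hm, rfl⟩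
      exact ⟨S, pstar_of_nonmeager hm, rfl⟩
  rw [hBeq]
  apply le_antisymm
  · -- non(M)(ℝ) ≤ non(M)(2^ω) : push forward along gmap
    refine le_csInf ⟨Cardinal.mk (Set.univ : Set (ℕ → Bool)), Set.univ, nonmeager_univ, rfl⟩ ?_
    rintro c ⟨S, hS, rfl⟩
    have hgS : ¬ IsMeagre (gmap '' S) := by
      intro hm
      exact hS ((meagre_preimage gmap (fun F hF => gmap_pre_nwd hF) hm).mono
        (Set.subset_preimage_image _ _))
    calc sInf {c : Cardinal | ∃ S : Set ℝ, ¬ IsMeagre S ∧ c = Cardinal.mk S}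
        ≤ Cardinal.mk (gmap '' S) := csInf_le' ⟨gmap '' S, hgS, rfl⟩
      _ ≤ Cardinal.mk S := Cardinal.mk_image_le
  · -- non(M)(2^ω) ≤ non(M)(ℝ) : push forward along hmap
    refine le_csInf ⟨Cardinal.mk (Set.univ : Set ℝ), Set.univ, nonmeager_univ, rfl⟩ ?_
    rintro c ⟨S, hS, rfl⟩
    have hhS : ¬ IsMeagre (hmap '' S) := by
      intro hm
      exact hS ((meagre_preimage hmap (fun F hF => hmap_pre_nwd hF) hm).mono
        (Set.subset_preimage_image _ _))
    calc sInf {c : Cardinal | ∃ S : Set (ℕ → Bool), ¬ IsMeagre S ∧ c = Cardinal.mk S}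
        ≤ Cardinal.mk (hmap '' S) := csInf_le' ⟨hmap '' S, hhS, rfl⟩
      _ ≤ Cardinal.mk S := Cardinal.mk_image_le
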